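/- Let n ≥ 1 be an integer, β ≥ 0 a real number, and for s ∈ [0,1] let μ_{βs}(σ) ∝ exp(βs·M(σ)²/(2n)) be the mean-field Ising measure on Ω = {±1}ⁿ, where M(σ) = Σᵢ σᵢ. For σ ∈ Ω, i ∈ [n], and s ∈ [0,1], define the single-site Glauber transition rate p_s(σ, σ^{⊕i}) = (1/n)·μ_{βs}(σ^{⊕i})/(μ_{βs}(σ) + μ_{βs}(σ^{⊕i})), where σ^{⊕i} is σ with the i-th spin flipped. Then for all s, s' ∈ [0,1], σ ∈ Ω, and i ∈ [n]: |p_{s'}(σ, σ^{⊕i})/p_s(σ, σ^{⊕i}) − 1| ≤ exp(2β·|s' − s|) − 1. -/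

import Mathlib

open Finset

noncomputable section

/-- Total magnetization of a spin configuration (`true` ↦ `+1`, `false` ↦ `−1`). -/
def mag (n : ℕ) (σ : Fin n → Bool) : ℤ := ∑ i, (if σ i then 1 else -1)

/-- The configuration `σ` with the `i`-th spin flipped. -/
def flipSpin (n : ℕ) (σ : Fin n → Bool) (i : Fin n) : Fin n → Bool :=
  Function.update σ i (!σ i)

/-- The mean-field Ising measure `μ_β(σ) = exp(β·M(σ)²/(2n)) / Z` on `{±1}ⁿ`. -/
def isingMu (n : ℕ) (β : ℝ) (σ : Fin n → Bool) : ℝ :=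
  Real.exp (β * (mag n σ : ℝ) ^ 2 / (2 * n)) /
    ∑ τ : Fin n → Bool, Real.exp (β * (mag n τ : ℝ) ^ 2 / (2 * n))

/-- The single-site Glauber transition rate at schedule time `s` along the linear
inverse-temperature schedule `s ↦ βs`. -/
def glauberRate (n : ℕ) (β : ℝ) (s : ℝ) (σ : Fin n → Bool) (i : Fin n) : ℝ :=
  (1 / n) * isingMu n (β * s) (flipSpin n σ i) /
    (isingMu n (β * s) σ + isingMu n (β * s) (flipSpin n σ i))

section Aux
noncomputable section

lemma key_ratio (a b : ℝ) :
    |(1 + Real.exp a) / (1 + Real.exp b) - 1| ≤ Real.exp |a - b| - 1 := by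
  have hb : (0:ℝ) < 1 + Real.exp b := by positivity
  have hc : Real.exp (a - b) ≤ Real.exp |a - b| := Real.exp_le_exp.2 (le_abs_self _)
  have hc' : Real.exp (b - a) ≤ Real.exp |a - b| := by
    have : b - a ≤ |a - b| := by rw [abs_sub_comm]; exact le_abs_self _
    exact Real.exp_le_exp.2 this
  have h1 : (1:ℝ) ≤ Real.exp |a - b| := Real.one_le_exp (abs_nonneg _)
  have hmul : Real.exp (a - b) * Real.exp b = Real.exp a := by
    rw [← Real.exp_add]; ring_nf
  have hmul' : Real.exp (b - a) * Real.exp a = Real.exp b := by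
    rw [← Real.exp_add]; ring_nf
  have hea := Real.exp_pos a
  have heb := Real.exp_pos b
  rw [abs_le]
  constructor
  · -- lower bound: ratio ≥ 2 - exp|a-b|
    have hinv : Real.exp (-(|a - b|)) ≤ (1 + Real.exp a) / (1 + Real.exp b) := by
      rw [le_div_iff₀ hb]
      have h2 : Real.exp (-(|a-b|)) ≤ 1 := Real.exp_le_one_iff.2 (neg_nonpos.2 (abs_nonneg _))
      have h3 : Real.exp (-(|a-b|)) * Real.exp b ≤ Real.exp a := by
        rw [← Real.exp_add]
        apply Real.exp_le_exp.2
        have : b - a ≤ |a - b| := by rw [abs_sub_comm]; exact le_abs_self _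
        linarith
      nlinarith
    have h4 : 2 - Real.exp |a - b| ≤ Real.exp (-(|a - b|)) := by
      have := Real.exp_neg (|a - b|)
      have hpos := Real.exp_pos (|a - b|)
      rw [this]
      rw [sub_le_iff_le_add, inv_eq_one_div, div_add' _ _ _ (ne_of_gt hpos), le_div_iff₀ hpos]
      nlinarith
    linarith
  · rw [sub_le_sub_iff_right, div_le_iff₀ hb]
    nlinarith


lemma mag_abs_le (n : ℕ) (σ : Fin n → Bool) : |(mag n σ : ℝ)| ≤ n := by
  have : |mag n σ| ≤ (n : ℤ) := by
    rw [mag]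
    calc |∑ i, (if σ i then (1:ℤ) else -1)| ≤ ∑ i : Fin n, |(if σ i then (1:ℤ) else -1)| :=
          Finset.abs_sum_le_sum_abs _ _
      _ ≤ ∑ _i : Fin n, 1 := Finset.sum_le_sum (fun j _ => by split <;> simp)
      _ = n := by simp
  exact_mod_cast this

lemma mag_flip (n : ℕ) (σ : Fin n → Bool) (i : Fin n) :
    mag n (flipSpin n σ i) = mag n σ - 2 * (if σ i then 1 else -1) := by
  classical
  rw [mag, mag, flipSpin]
  rw [← Finset.sum_erase_add _ _ (Finset.mem_univ i),
      ← Finset.sum_erase_add _ _ (Finset.mem_univ i)]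
  have h1 : ∀ j ∈ Finset.univ.erase i,
      (if Function.update σ i (!σ i) j then (1:ℤ) else -1) = (if σ j then 1 else -1) := by
    intro j hj
    rw [Function.update_of_ne (Finset.ne_of_mem_erase hj)]
  rw [Finset.sum_congr rfl h1, Function.update_self]
  cases h : σ i <;> simp [h] <;> ring

lemma glauberRate_eq (n : ℕ) (hn : 1 ≤ n) (β : ℝ) (t : ℝ) (σ : Fin n → Bool) (i : Fin n) :
    glauberRate n β t σ i =
      (1 / n) / (Real.exp ((β * t) * ((mag n σ : ℝ) ^ 2 - (mag n (flipSpin n σ i) : ℝ) ^ 2) / (2 * n)) + 1) := by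
  have hZ : (0:ℝ) < ∑ τ : Fin n → Bool, Real.exp (β * t * (mag n τ : ℝ) ^ 2 / (2 * n)) :=
    Finset.sum_pos (fun τ _ => Real.exp_pos _) Finset.univ_nonempty
  have hu := Real.exp_pos (β * t * (mag n σ : ℝ) ^ 2 / (2 * n))
  have hv := Real.exp_pos (β * t * (mag n (flipSpin n σ i) : ℝ) ^ 2 / (2 * n))
  have hD : Real.exp ((β * t) * ((mag n σ : ℝ) ^ 2 - (mag n (flipSpin n σ i) : ℝ) ^ 2) / (2 * n)) =
      Real.exp (β * t * (mag n σ : ℝ) ^ 2 / (2 * n)) /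
        Real.exp (β * t * (mag n (flipSpin n σ i) : ℝ) ^ 2 / (2 * n)) := by
    rw [← Real.exp_sub]; congr 1; ring
  rw [glauberRate, isingMu, isingMu, hD]
  field_simp


end
end Aux

/-- Local stability of the annealed single-site Glauber rates of the mean-field
Ising model along the linear schedule. -/
theorem glauber_rate_local_stability (n : ℕ) (hn : 1 ≤ n) (β : ℝ) (hβ : 0 ≤ β)
    (s s' : ℝ) (hs : s ∈ Set.Icc (0 : ℝ) 1) (hs' : s' ∈ Set.Icc (0 : ℝ) 1)
    (σ : Fin n → Bool) (i : Fin n) :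
    |glauberRate n β s' σ i / glauberRate n β s σ i - 1| ≤
      Real.exp (2 * β * |s' - s|) - 1 := by
  have hn' : (0:ℝ) < n := by exact_mod_cast hn
  set D : ℝ := (mag n σ : ℝ) ^ 2 - (mag n (flipSpin n σ i) : ℝ) ^ 2 with hDdef
  have h1 := glauberRate_eq n hn β s' σ i
  have h2 := glauberRate_eq n hn β s σ i
  have ha := Real.exp_pos ((β * s') * D / (2 * n))
  have hb := Real.exp_pos ((β * s) * D / (2 * n))
  have hratio : glauberRate n β s' σ i / glauberRate n β s σ i =
      (1 + Real.exp ((β * s) * D / (2 * n))) / (1 + Real.exp ((β * s') * D / (2 * n))) := by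
    rw [h1, h2]
    rw [div_div_div_comm, div_self (by positivity), one_div_div]
    rw [hDdef]
    ring_nf
  -- bound on |D|
  have e1 := mag_abs_le n σ
  have e2 := mag_abs_le n (flipSpin n σ i)
  have hm : (mag n σ : ℝ) - (mag n (flipSpin n σ i) : ℝ) =
      2 * (if σ i then (1:ℝ) else -1) := by
    have := mag_flip n σ i
    push_cast [this]
    split <;> ring
  have hD : |D| ≤ 4 * n := by
    have h5 : |(mag n σ : ℝ) - (mag n (flipSpin n σ i) : ℝ)| = 2 := by
      rw [hm]; split <;> norm_num
    have h6 : |(mag n σ : ℝ) + (mag n (flipSpin n σ i) : ℝ)| ≤ 2 * n := by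
      calc |(mag n σ : ℝ) + (mag n (flipSpin n σ i) : ℝ)|
          ≤ |(mag n σ : ℝ)| + |(mag n (flipSpin n σ i) : ℝ)| := abs_add_le _ _
        _ ≤ 2 * n := by linarith
    calc |D| = |((mag n σ : ℝ) - (mag n (flipSpin n σ i) : ℝ))| *
          |((mag n σ : ℝ) + (mag n (flipSpin n σ i) : ℝ))| := by
          rw [← abs_mul]; congr 1; rw [hDdef]; ring
      _ ≤ 2 * (2 * n) := by rw [h5]; linarith
      _ = 4 * n := by ring
  have hba : (β * s) * D / (2 * n) - (β * s') * D / (2 * n) = β * (s - s') * D / (2 * n) := by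
    ring
  have habs : |(β * s) * D / (2 * n) - (β * s') * D / (2 * n)| ≤ 2 * β * |s' - s| := by
    rw [hba, abs_div, abs_mul, abs_mul, abs_of_nonneg hβ,
        abs_of_pos (by positivity : (0:ℝ) < 2 * n), abs_sub_comm s s']
    rw [div_le_iff₀ (by positivity)]
    have h7 : (0:ℝ) ≤ β * |s' - s| := by positivity
    nlinarith [abs_nonneg D]
  calc |glauberRate n β s' σ i / glauberRate n β s σ i - 1|
      = |(1 + Real.exp ((β * s) * D / (2 * n))) / (1 + Real.exp ((β * s') * D / (2 * n))) - 1| := by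
        rw [hratio]
    _ ≤ Real.exp |(β * s) * D / (2 * n) - (β * s') * D / (2 * n)| - 1 := key_ratio _ _
    _ ≤ Real.exp (2 * β * |s' - s|) - 1 := by
        have := Real.exp_le_exp.2 habs
        linarith
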